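/- Let E ∈ ℝ^{d'×d} be a column-stochastic matrix. The following three statements are equivalent: (1) for every probability vector γ ∈ Δ^{d-1}, every entry of Eγ is positive (i.e. the Bayes map Ê_γ is well defined for every prior γ); (2) every entry of E is positive; (3) for every pair of probability vectors p ∈ Δ^{d-1} and q ∈ Δ^{d'-1}, there exists γ ∈ Δ^{d-1} such that Eγ has all entries positive and Ê_γ q = p. -/

import Mathlib

open Matrix BigOperators

/-- A column-stochastic matrix: nonnegative entries, each column sums to 1. -/
def ColStochastic {d' d : ℕ} (E : Matrix (Fin d') (Fin d) ℝ) : Prop :=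
  (∀ y x, 0 ≤ E y x) ∧ ∀ x, ∑ y, E y x = 1

/-- A probability vector: nonnegative entries summing to 1. -/
def ProbVec {d : ℕ} (p : Fin d → ℝ) : Prop :=
  (∀ x, 0 ≤ p x) ∧ ∑ x, p x = 1

/-- The Bayes map `Ê_γ = D_γ Eᵀ D_{Eγ}⁻¹`, entrywise `(Ê_γ)_{x,y} = E_{y,x} γ_x / (Eγ)_y`. -/
noncomputable def bayesMap {d' d : ℕ} (E : Matrix (Fin d') (Fin d) ℝ) (γ : Fin d → ℝ) :
    Matrix (Fin d) (Fin d') ℝ :=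
  Matrix.of fun x y => E y x * γ x / (E *ᵥ γ) y

lemma exists_pos_of_sum_one {d : ℕ} {γ : Fin d → ℝ} (h : ∑ x, γ x = 1) :
    ∃ x, 0 < γ x := by
  by_contra hc
  push_neg at hc
  have : (∑ x, γ x) ≤ 0 := Finset.sum_nonpos fun x _ => hc x
  linarith

lemma mulVec_pos_of_pos {d' d : ℕ} {E : Matrix (Fin d') (Fin d) ℝ}
    (hpos : ∀ y x, 0 < E y x) {γ : Fin d → ℝ}
    (h0 : ∀ x, 0 ≤ γ x) (h1 : ∑ x, γ x = 1) : ∀ y, 0 < (E *ᵥ γ) y := by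
  intro y
  obtain ⟨x, hx⟩ := exists_pos_of_sum_one h1
  have : 0 < ∑ x, E y x * γ x := by
    refine Finset.sum_pos' (fun i _ => mul_nonneg (hpos y i).le (h0 i)) ⟨x, Finset.mem_univ x, ?_⟩
    exact mul_pos (hpos y x) hx
  simpa [Matrix.mulVec, dotProduct] using this

lemma exists_hacking_prior {d' d : ℕ} (E : Matrix (Fin d') (Fin d) ℝ)
    (hE : ColStochastic E) (hpos : ∀ y x, 0 < E y x)
    (p : Fin d → ℝ) (q : Fin d' → ℝ) (hp : ProbVec p) (hq : ProbVec q) :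
    ∃ γ : Fin d → ℝ, ProbVec γ ∧ (∀ y, 0 < (E *ᵥ γ) y) ∧ (bayesMap E γ) *ᵥ q = p := by
  classical
  -- the compact set of priors supported on the support of p
  set K : Set (Fin d → ℝ) :=
    {γ | (∀ x, 0 ≤ γ x) ∧ (∀ x, p x = 0 → γ x = 0) ∧ ∑ x, γ x = 1} with hK
  have hpK : p ∈ K := ⟨hp.1, fun x hx => hx, hp.2⟩
  have hKsub : ∀ γ ∈ K, ∀ y, 0 < (E *ᵥ γ) y := fun γ hγ => mulVec_pos_of_pos hpos hγ.1 hγ.2.2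
  have hKclosed : IsClosed K := by
    have h1 : IsClosed {γ : Fin d → ℝ | ∀ x, 0 ≤ γ x} := by
      have : {γ : Fin d → ℝ | ∀ x, 0 ≤ γ x} = ⋂ x, {γ | 0 ≤ γ x} := by ext; simp
      rw [this]
      exact isClosed_iInter fun x => isClosed_le continuous_const (continuous_apply x)
    have h2 : IsClosed {γ : Fin d → ℝ | ∀ x, p x = 0 → γ x = 0} := by
      have : {γ : Fin d → ℝ | ∀ x, p x = 0 → γ x = 0} =
          ⋂ x, {γ | p x = 0 → γ x = 0} := by ext; simp
      rw [this]
      refine isClosed_iInter fun x => ?_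
      by_cases hx : p x = 0
      · have : {γ : Fin d → ℝ | p x = 0 → γ x = 0} = {γ | γ x = 0} := by ext; simp [hx]
        rw [this]
        exact isClosed_eq (continuous_apply x) continuous_const
      · have : {γ : Fin d → ℝ | p x = 0 → γ x = 0} = Set.univ := by ext; simp [hx]
        rw [this]; exact isClosed_univ
    have h3 : IsClosed {γ : Fin d → ℝ | ∑ x, γ x = 1} :=
      isClosed_eq (continuous_finset_sum _ fun x _ => continuous_apply x) continuous_const
    have : K = {γ : Fin d → ℝ | ∀ x, 0 ≤ γ x} ∩
        ({γ | ∀ x, p x = 0 → γ x = 0} ∩ {γ | ∑ x, γ x = 1}) := by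
      ext γ; simp [hK, Set.mem_setOf_eq, and_assoc]
    rw [this]; exact h1.inter (h2.inter h3)
  have hKcomp : IsCompact K := by
    refine IsCompact.of_isClosed_subset (isCompact_Icc : IsCompact (Set.Icc (0 : Fin d → ℝ) 1)) hKclosed ?_
    intro γ hγ
    rw [Set.mem_Icc]
    constructor
    · intro x; exact hγ.1 x
    · intro x
      calc γ x ≤ ∑ x', γ x' :=
            Finset.single_le_sum (fun i _ => hγ.1 i) (Finset.mem_univ x)
        _ = 1 := hγ.2.2
  -- the functional to maximize
  set H : (Fin d → ℝ) → ℝ :=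
    fun γ => (∏ x, (γ x) ^ (p x)) / ∏ y, ((E *ᵥ γ) y) ^ (q y) with hHdef
  have hnumcont : Continuous fun γ : Fin d → ℝ => ∏ x, (γ x) ^ (p x) := by
    refine continuous_finset_prod _ fun x _ => ?_
    exact (Real.continuous_rpow_const (hp.1 x)).comp (continuous_apply x)
  have hdencont : Continuous fun γ : Fin d → ℝ => ∏ y, ((E *ᵥ γ) y) ^ (q y) := by
    refine continuous_finset_prod _ fun y _ => ?_
    refine (Real.continuous_rpow_const (hq.1 y)).comp ?_
    have : (fun γ : Fin d → ℝ => (E *ᵥ γ) y) = fun γ => ∑ x, E y x * γ x := by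
      funext γ; simp [Matrix.mulVec, dotProduct]
    rw [this]
    exact continuous_finset_sum _ fun x _ => continuous_const.mul (continuous_apply x)
  have hdenpos : ∀ γ ∈ K, 0 < ∏ y, ((E *ᵥ γ) y) ^ (q y) := by
    intro γ hγ
    exact Finset.prod_pos fun y _ => Real.rpow_pos_of_pos (hKsub γ hγ y) (q y)
  have hHcont : ContinuousOn H K := by
    exact ContinuousOn.div hnumcont.continuousOn hdencont.continuousOn
      fun γ hγ => (hdenpos γ hγ).ne'
  obtain ⟨γ, hγK, hγmax⟩ := hKcomp.exists_isMaxOn ⟨p, hpK⟩ hHcont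
  have hHp : 0 < H p := by
    refine div_pos (Finset.prod_pos fun x _ => ?_) (hdenpos p hpK)
    rcases eq_or_lt_of_le (hp.1 x) with h0 | h0
    · rw [← h0, Real.rpow_zero]; norm_num
    · exact Real.rpow_pos_of_pos h0 (p x)
  have hγpos : ∀ x, 0 < p x → 0 < γ x := by
    intro x hx
    rcases eq_or_lt_of_le (hγK.1 x) with h0 | h0
    · exfalso
      have hz : H γ = 0 := by
        rw [hHdef]
        simp only
        rw [Finset.prod_eq_zero (Finset.mem_univ x) (by rw [← h0, Real.zero_rpow hx.ne'])]
        simp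
      have := hγmax hpK
      simp only [Set.mem_setOf_eq] at this
      rw [hz] at this
      linarith
    · exact h0
  have hEγpos : ∀ y, 0 < (E *ᵥ γ) y := hKsub γ hγK
  -- the stationarity quantity
  set lam : Fin d → ℝ := fun x => p x / γ x - ∑ y, q y * E y x / (E *ᵥ γ) y with hlam
  have hstat : ∀ x0 x1, 0 < p x0 → 0 < p x1 → lam x0 = lam x1 := by
    intro x0 x1 hp0 hp1
    by_cases hne : x0 = x1
    · rw [hne]
    set δ : Fin d → ℝ := fun x => (if x = x0 then (1:ℝ) else 0) - (if x = x1 then 1 else 0)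
      with hδ
    have hδ0 : δ x0 = 1 := by simp [hδ, hne]
    have hδ1 : δ x1 = -1 := by simp [hδ, Ne.symm hne]
    have hδother : ∀ x, x ≠ x0 → x ≠ x1 → δ x = 0 := by
      intro x h1 h2; simp [hδ, h1, h2]
    have hδsum : ∑ x, δ x = 0 := by
      simp [hδ, Finset.sum_sub_distrib]
    have hEδ : ∀ y, (E *ᵥ δ) y = E y x0 - E y x1 := by
      intro y
      have : ∀ x, E y x * δ x =
          (if x = x0 then E y x0 else 0) - (if x = x1 then E y x1 else 0) := by
        intro x
        by_cases h1 : x = x0 <;> by_cases h2 : x = x1 <;>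
          simp_all [hδ] <;> ring
      simp only [Matrix.mulVec, dotProduct, this, Finset.sum_sub_distrib,
        Finset.sum_ite_eq', Finset.mem_univ, if_true]
    set g : ℝ → ℝ := fun t =>
      (∑ x, p x * Real.log (γ x + t * δ x)) -
        ∑ y, q y * Real.log ((E *ᵥ γ) y + t * (E *ᵥ δ) y) with hg
    -- derivative of g at 0
    have hderiv : HasDerivAt g
        ((∑ x, p x * δ x / γ x) - ∑ y, q y * (E *ᵥ δ) y / (E *ᵥ γ) y) 0 := by
      refine HasDerivAt.sub (HasDerivAt.fun_sum fun x _ => ?_) (HasDerivAt.fun_sum fun y _ => ?_)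
      · rcases eq_or_lt_of_le (hp.1 x) with h0 | h0
        · have : (fun t : ℝ => p x * Real.log (γ x + t * δ x)) = fun _ => 0 := by
            funext t; rw [← h0, zero_mul]
          rw [this, ← h0, zero_mul, zero_div]
          exact hasDerivAt_const 0 0
        · have hγx : γ x ≠ 0 := (hγpos x h0).ne'
          have hin : HasDerivAt (fun t : ℝ => γ x + t * δ x) (δ x) 0 := by
            simpa using ((hasDerivAt_mul_const (δ x)).const_add (γ x))
          have := (hin.log (by simpa using hγx)).const_mul (p x)
          convert this using 1
          case e'_4 => rfl
          simp [mul_div_assoc]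
      · have hEy : (E *ᵥ γ) y ≠ 0 := (hEγpos y).ne'
        have hin : HasDerivAt (fun t : ℝ => (E *ᵥ γ) y + t * (E *ᵥ δ) y) ((E *ᵥ δ) y) 0 := by
          simpa using ((hasDerivAt_mul_const ((E *ᵥ δ) y)).const_add ((E *ᵥ γ) y))
        have := (hin.log (by simpa using hEy)).const_mul (q y)
        convert this using 1
        case e'_4 => rfl
        simp [mul_div_assoc]
    -- g has a local max at 0
    set ε : ℝ := min (γ x0) (γ x1) with hε
    have hεpos : 0 < ε := lt_min (hγpos x0 hp0) (hγpos x1 hp1)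
    have hmemK : ∀ t ∈ Set.Ioo (-ε) ε, (fun x => γ x + t * δ x) ∈ K := by
      intro t ht
      refine ⟨?_, ?_, ?_⟩
      · intro x
        show 0 ≤ γ x + t * δ x
        by_cases h1 : x = x0
        · subst h1; rw [hδ0, mul_one]
          have : -ε < t := ht.1
          have : ε ≤ γ x := min_le_left _ _
          linarith
        · by_cases h2 : x = x1
          · subst h2; rw [hδ1]
            have : t < ε := ht.2
            have : ε ≤ γ x := min_le_right _ _
            linarith
          · rw [hδother x h1 h2, mul_zero, add_zero]; exact hγK.1 x
      · intro x hx
        show γ x + t * δ x = 0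
        have h1 : x ≠ x0 := fun h => by subst h; exact absurd hx hp0.ne'
        have h2 : x ≠ x1 := fun h => by subst h; exact absurd hx hp1.ne'
        rw [hδother x h1 h2, mul_zero, add_zero]; exact hγK.2.1 x hx
      · show ∑ x, (γ x + t * δ x) = 1
        rw [Finset.sum_add_distrib, hγK.2.2, ← Finset.mul_sum, hδsum, mul_zero, add_zero]
    have hposS : ∀ t ∈ Set.Ioo (-ε) ε, ∀ x, 0 < p x → 0 < γ x + t * δ x := by
      intro t ht x hx
      by_cases h1 : x = x0
      · subst h1; rw [hδ0, mul_one]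
        have h3 : -ε < t := ht.1
        have h4 : ε ≤ γ x := min_le_left _ _
        linarith
      · by_cases h2 : x = x1
        · subst h2; rw [hδ1]
          have h3 : t < ε := ht.2
          have h4 : ε ≤ γ x := min_le_right _ _
          linarith
        · rw [hδother x h1 h2, mul_zero, add_zero]; exact hγpos x hx
    have hHexp : ∀ t ∈ Set.Ioo (-ε) ε, H (fun x => γ x + t * δ x) = Real.exp (g t) := by
      intro t ht
      have hnum : (∏ x, (γ x + t * δ x) ^ (p x)) =
          Real.exp (∑ x, p x * Real.log (γ x + t * δ x)) := by
        rw [Real.exp_sum]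
        refine Finset.prod_congr rfl fun x _ => ?_
        rcases eq_or_lt_of_le (hp.1 x) with h0 | h0
        · rw [← h0, Real.rpow_zero, zero_mul, Real.exp_zero]
        · rw [Real.rpow_def_of_pos (hposS t ht x h0), mul_comm]
      have hElin : ∀ y, (E *ᵥ fun x => γ x + t * δ x) y = (E *ᵥ γ) y + t * (E *ᵥ δ) y := by
        intro y
        simp only [Matrix.mulVec, dotProduct, mul_add, Finset.sum_add_distrib,
          Finset.mul_sum]
        congr 1
        refine Finset.sum_congr rfl fun x _ => by ring
      have hEpos' : ∀ y, 0 < (E *ᵥ γ) y + t * (E *ᵥ δ) y := by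
        intro y
        have := hKsub _ (hmemK t ht) y
        rwa [hElin y] at this
      have hden : (∏ y, ((E *ᵥ fun x => γ x + t * δ x) y) ^ (q y)) =
          Real.exp (∑ y, q y * Real.log ((E *ᵥ γ) y + t * (E *ᵥ δ) y)) := by
        rw [Real.exp_sum]
        refine Finset.prod_congr rfl fun y _ => ?_
        rw [hElin y, Real.rpow_def_of_pos (hEpos' y), mul_comm]
      rw [hHdef]
      simp only
      rw [hnum, hden, ← Real.exp_sub]
  -- local max
    have hγeq : (fun x => γ x + (0:ℝ) * δ x) = γ := by funext x; simp
    have hloc : IsLocalMax g 0 := by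
      have hmem : Set.Ioo (-ε) ε ∈ nhds (0:ℝ) := Ioo_mem_nhds (by linarith) hεpos
      filter_upwards [hmem] with t ht
      have h0mem : (0:ℝ) ∈ Set.Ioo (-ε) ε := ⟨by linarith, hεpos⟩
      have h1 := hHexp t ht
      have h2 := hHexp 0 h0mem
      rw [hγeq] at h2
      have h3 : H (fun x => γ x + t * δ x) ≤ H γ := by
        have := hγmax (hmemK t ht)
        simpa only [Set.mem_setOf_eq] using this
      rw [h1, h2] at h3
      exact (Real.exp_le_exp.mp h3)
    have hzero := hloc.hasDerivAt_eq_zero hderiv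
    -- simplify the derivative
    have hsum1 : (∑ x, p x * δ x / γ x) = p x0 / γ x0 - p x1 / γ x1 := by
      have : ∀ x, p x * δ x / γ x =
          (if x = x0 then p x0 / γ x0 else 0) - (if x = x1 then p x1 / γ x1 else 0) := by
        intro x
        by_cases h1 : x = x0 <;> by_cases h2 : x = x1 <;> simp [h1, h2, hδ0, hδ1, hne, Ne.symm hne, hδother x] <;>
          first
            | ring
            | (rw [hδother x h1 h2]; ring)
      rw [Finset.sum_congr rfl fun x _ => this x]
      simp [Finset.sum_sub_distrib]
    have hsum2 : (∑ y, q y * (E *ᵥ δ) y / (E *ᵥ γ) y) =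
        (∑ y, q y * E y x0 / (E *ᵥ γ) y) - ∑ y, q y * E y x1 / (E *ᵥ γ) y := by
      rw [← Finset.sum_sub_distrib]
      refine Finset.sum_congr rfl fun y _ => ?_
      rw [hEδ y]; ring
    rw [hsum1, hsum2] at hzero
    rw [hlam]
    simp only
    linarith
  -- conclude
  obtain ⟨xs, hxs⟩ := exists_pos_of_sum_one hp.2
  have hpoint : ∀ x, γ x * lam x = p x - ∑ y, q y * (E y x * γ x) / (E *ᵥ γ) y := by
    intro x
    rcases eq_or_lt_of_le (hp.1 x) with h0 | h0
    · have hγx : γ x = 0 := hγK.2.1 x h0.symm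
      rw [hγx, zero_mul, ← h0]
      simp
    · have hγx : γ x ≠ 0 := (hγpos x h0).ne'
      rw [hlam]
      simp only
      rw [mul_sub, Finset.mul_sum]
      congr 1
      · field_simp
      · refine Finset.sum_congr rfl fun y _ => by ring
  have hsumpt : ∑ x, γ x * lam x = 0 := by
    rw [Finset.sum_congr rfl fun x _ => hpoint x, Finset.sum_sub_distrib, hp.2]
    have : ∑ x, ∑ y, q y * (E y x * γ x) / (E *ᵥ γ) y = 1 := by
      rw [Finset.sum_comm]
      have : ∀ y, ∑ x, q y * (E y x * γ x) / (E *ᵥ γ) y = q y := by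
        intro y
        have h1 : ∑ x, q y * (E y x * γ x) / (E *ᵥ γ) y =
            (q y / (E *ᵥ γ) y) * ∑ x, E y x * γ x := by
          rw [Finset.mul_sum]
          refine Finset.sum_congr rfl fun x _ => by ring
        rw [h1]
        have h2 : ∑ x, E y x * γ x = (E *ᵥ γ) y := by
          simp [Matrix.mulVec, dotProduct]
        rw [h2, div_mul_cancel₀ _ (hEγpos y).ne']
      rw [Finset.sum_congr rfl fun y _ => this y, hq.2]
    rw [this, sub_self]
  have hczero : lam xs = 0 := by
    have hconst : ∀ x, γ x * lam x = γ x * lam xs := by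
      intro x
      rcases eq_or_lt_of_le (hp.1 x) with h0 | h0
      · rw [hγK.2.1 x h0.symm, zero_mul, zero_mul]
      · rw [hstat x xs h0 hxs]
    have : ∑ x, γ x * lam x = lam xs := by
      rw [Finset.sum_congr rfl fun x _ => hconst x, ← Finset.sum_mul, hγK.2.2, one_mul]
    rw [← this, hsumpt]
  have hlamzero : ∀ x, γ x * lam x = 0 := by
    intro x
    rcases eq_or_lt_of_le (hp.1 x) with h0 | h0
    · rw [hγK.2.1 x h0.symm, zero_mul]
    · rw [hstat x xs h0 hxs, hczero, mul_zero]
  refine ⟨γ, ⟨hγK.1, hγK.2.2⟩, hEγpos, ?_⟩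
  funext x
  have := hpoint x
  rw [hlamzero x] at this
  have hpx : p x = ∑ y, q y * (E y x * γ x) / (E *ᵥ γ) y := by linarith
  rw [hpx]
  simp only [Matrix.mulVec, dotProduct, bayesMap, Matrix.of_apply]
  refine Finset.sum_congr rfl fun y _ => by ring

theorem always_prior_hackable_iff_positive_entries {d' d : ℕ}
    (E : Matrix (Fin d') (Fin d) ℝ) (hE : ColStochastic E) :
    ((∀ γ : Fin d → ℝ, ProbVec γ → ∀ y, 0 < (E *ᵥ γ) y) ↔ (∀ y x, 0 < E y x)) ∧
    ((∀ y x, 0 < E y x) ↔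
      (∀ (p : Fin d → ℝ) (q : Fin d' → ℝ), ProbVec p → ProbVec q →
        ∃ γ : Fin d → ℝ, ProbVec γ ∧ (∀ y, 0 < (E *ᵥ γ) y) ∧ (bayesMap E γ) *ᵥ q = p)) := by
  constructor
  · constructor
    · intro h y x
      have hγ : ProbVec (fun x' => if x' = x then (1:ℝ) else 0) := by
        constructor
        · intro x'; by_cases hx : x' = x <;> simp [hx]
        · simp
      have := h _ hγ y
      simpa [Matrix.mulVec, dotProduct, mul_ite] using this
    · intro h γ hγ
      exact mulVec_pos_of_pos h hγ.1 hγ.2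
  · constructor
    · intro h p q hp hq
      exact exists_hacking_prior E hE h p q hp hq
    · intro h y x
      -- use p = indicator of x, q = uniform
      have hd' : 0 < d' := Fin.pos y
      have hq : ProbVec (fun _ : Fin d' => (d' : ℝ)⁻¹) := by
        constructor
        · intro _; positivity
        · simp [Finset.sum_const]
          field_simp
      have hp : ProbVec (fun x' : Fin d => if x' = x then (1:ℝ) else 0) := by
        constructor
        · intro x'; by_cases hx : x' = x <;> simp [hx]
        · simp
      obtain ⟨γ, hγ, hEγ, hbay⟩ := h _ _ hp hq
      -- show γ x' = 0 for x' ≠ x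
      have hsupp : ∀ x', x' ≠ x → γ x' = 0 := by
        intro x' hx'
        by_contra hne
        have hγx' : 0 < γ x' := lt_of_le_of_ne (hγ.1 x') (Ne.symm hne)
        have h0 : ((bayesMap E γ) *ᵥ (fun _ : Fin d' => (d' : ℝ)⁻¹)) x' = 0 := by
          rw [hbay]; simp [hx']
        obtain ⟨y', hy'⟩ := exists_pos_of_sum_one (hE.2 x')
        have hterm : (0:ℝ) < (bayesMap E γ x' y') * (d' : ℝ)⁻¹ := by
          have : 0 < E y' x' * γ x' / (E *ᵥ γ) y' :=
            div_pos (mul_pos hy' hγx') (hEγ y')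
          have hd : (0:ℝ) < (d' : ℝ)⁻¹ := by positivity
          exact mul_pos (by simpa [bayesMap] using this) hd
        have hnn : ∀ y'', 0 ≤ (bayesMap E γ x' y'') * (d' : ℝ)⁻¹ := by
          intro y''
          have : 0 ≤ E y'' x' * γ x' / (E *ᵥ γ) y'' :=
            div_nonneg (mul_nonneg (hE.1 y'' x') (hγ.1 x')) (hEγ y'').le
          have hd : (0:ℝ) ≤ (d' : ℝ)⁻¹ := by positivity
          exact mul_nonneg (by simpa [bayesMap] using this) hd
        have : 0 < ((bayesMap E γ) *ᵥ (fun _ : Fin d' => (d' : ℝ)⁻¹)) x' := by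
          have : 0 < ∑ y'', (bayesMap E γ x' y'') * (d' : ℝ)⁻¹ :=
            Finset.sum_pos' (fun y'' _ => hnn y'') ⟨y', Finset.mem_univ y', hterm⟩
          simpa [Matrix.mulVec, dotProduct] using this
        rw [h0] at this; exact lt_irrefl 0 this
      have hγx : γ x = 1 := by
        have := hγ.2
        rwa [Finset.sum_eq_single x (fun b _ hb => hsupp b hb) (fun hx => absurd (Finset.mem_univ x) hx)] at this
      have : (E *ᵥ γ) y = E y x := by
        simp only [Matrix.mulVec, dotProduct]
        rw [Finset.sum_eq_single x (fun b _ hb => by simp [hsupp b hb])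
          (fun hx => absurd (Finset.mem_univ x) hx), hγx, mul_one]
      have h2 := hEγ y
      rwa [this] at h2
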